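/- Let L ≥ 0, β ≥ 0, and let U, U' ∈ ℝ^{n×r} satisfy ‖U − U'‖_F ≤ 1, ‖U'‖_op ≤ 1, and U'(U')ᵀ1_n = 1_n. Then ‖g(U) − g(U')‖_F ≤ ( ‖2A + y1_nᵀ + 1_n yᵀ‖_F + 2L + 12 n β ) · ‖U − U'‖_F. -/

import Mathlib

open Matrix Finset

/-- The all-ones vector in `ℝ^n`. -/
noncomputable def ones (n : ℕ) : Fin n → ℝ := fun _ => 1

/-- Frobenius norm of a real matrix. -/
noncomputable def frob {m r : ℕ} (M : Matrix (Fin m) (Fin r) ℝ) : ℝ :=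
  Real.sqrt (∑ i, ∑ j, (M i j) ^ 2)

/-- The `ℓ²→ℓ²` operator (spectral) norm of a real matrix. -/
noncomputable def opNorm {m n : ℕ} (M : Matrix (Fin m) (Fin n) ℝ) : ℝ :=
  ‖LinearMap.toContinuousLinearMap (Matrix.toEuclideanLin (𝕜 := ℝ) M)‖

/-- The gradient map `g(U) = (2A + 2L·I + 1 ȳᵀ + ȳ 1ᵀ) U`
with `ȳ = y + β(UUᵀ1 − 1)`. -/
noncomputable def gradLag {n r : ℕ} (A : Matrix (Fin n) (Fin n) ℝ) (y : Fin n → ℝ)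
    (L β : ℝ) (U : Matrix (Fin n) (Fin r) ℝ) : Matrix (Fin n) (Fin r) ℝ :=
  ((2 : ℝ) • A + (2 * L) • (1 : Matrix (Fin n) (Fin n) ℝ)
    + Matrix.vecMulVec (ones n) (y + β • ((U * Uᵀ).mulVec (ones n) - ones n))
    + Matrix.vecMulVec (y + β • ((U * Uᵀ).mulVec (ones n) - ones n)) (ones n)) * U

open scoped Matrix.Norms.L2Operator

/-! ### Auxiliary vector norm -/

noncomputable def vn {n : ℕ} (x : Fin n → ℝ) : ℝ := Real.sqrt (∑ i, x i ^ 2)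

lemma vn_eq {n : ℕ} (x : Fin n → ℝ) :
    vn x = ‖(WithLp.equiv 2 (Fin n → ℝ)).symm x‖ := by
  simp [vn, EuclideanSpace.norm_eq, Real.norm_eq_abs, sq_abs]

lemma vn_nonneg {n : ℕ} (x : Fin n → ℝ) : 0 ≤ vn x := Real.sqrt_nonneg _

lemma vn_add_le {n : ℕ} (x y : Fin n → ℝ) : vn (x + y) ≤ vn x + vn y := by
  rw [vn_eq, vn_eq, vn_eq]
  exact norm_add_le _ _

lemma vn_ones (n : ℕ) : vn (ones n) = Real.sqrt n := by
  simp [vn, ones]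

/-! ### Frobenius norm facts -/

lemma frob_nonneg {m r : ℕ} (M : Matrix (Fin m) (Fin r) ℝ) : 0 ≤ frob M :=
  Real.sqrt_nonneg _

lemma frob_eq {m r : ℕ} (M : Matrix (Fin m) (Fin r) ℝ) :
    frob M = ‖(WithLp.equiv 2 (Fin m × Fin r → ℝ)).symm (fun p => M p.1 p.2)‖ := by
  rw [frob, EuclideanSpace.norm_eq]
  congr 1
  simp [Real.norm_eq_abs, sq_abs, Fintype.sum_prod_type]

lemma frob_add_le {m r : ℕ} (X Y : Matrix (Fin m) (Fin r) ℝ) :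
    frob (X + Y) ≤ frob X + frob Y := by
  rw [frob_eq, frob_eq, frob_eq]
  exact norm_add_le ((WithLp.equiv 2 (Fin m × Fin r → ℝ)).symm (fun p => X p.1 p.2))
    ((WithLp.equiv 2 (Fin m × Fin r → ℝ)).symm (fun p => Y p.1 p.2))

lemma frob_smul {m r : ℕ} (c : ℝ) (X : Matrix (Fin m) (Fin r) ℝ) :
    frob (c • X) = |c| * frob X := by
  simp only [frob, Matrix.smul_apply, smul_eq_mul, mul_pow, ← Finset.mul_sum]
  rw [Real.sqrt_mul (sq_nonneg c), Real.sqrt_sq_eq_abs]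

lemma frob_transpose {m r : ℕ} (M : Matrix (Fin m) (Fin r) ℝ) :
    frob Mᵀ = frob M := by
  rw [frob, frob, Finset.sum_comm]
  rfl

lemma frob_mul_le {m n r : ℕ} (M : Matrix (Fin m) (Fin n) ℝ) (N : Matrix (Fin n) (Fin r) ℝ) :
    frob (M * N) ≤ frob M * frob N := by
  rw [frob, frob, frob, ← Real.sqrt_mul (by positivity)]
  apply Real.sqrt_le_sqrt
  calc ∑ i, ∑ j, ((M * N) i j) ^ 2
      ≤ ∑ i, ∑ j, (∑ k, M i k ^ 2) * (∑ k, N k j ^ 2) := by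
        gcongr with i _ j _
        simpa [Matrix.mul_apply] using
          Finset.sum_mul_sq_le_sq_mul_sq Finset.univ (fun k => M i k) (fun k => N k j)
    _ = (∑ i, ∑ k, M i k ^ 2) * (∑ j, ∑ k, N k j ^ 2) := by
        rw [Finset.sum_mul_sum]
    _ = (∑ i, ∑ k, M i k ^ 2) * (∑ k, ∑ j, N k j ^ 2) := by
        rw [Finset.sum_comm (s := Finset.univ) (t := Finset.univ)
          (f := fun j k => N k j ^ 2)]

lemma vn_mulVec_le_frob {m n : ℕ} (M : Matrix (Fin m) (Fin n) ℝ) (w : Fin n → ℝ) :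
    vn (M.mulVec w) ≤ frob M * vn w := by
  rw [vn, vn, frob, ← Real.sqrt_mul (by positivity)]
  apply Real.sqrt_le_sqrt
  calc ∑ i, (M.mulVec w i) ^ 2
      ≤ ∑ i, ((∑ k, M i k ^ 2) * (∑ k, w k ^ 2)) := by
        gcongr with i _
        simpa [Matrix.mulVec, dotProduct] using
          Finset.sum_mul_sq_le_sq_mul_sq Finset.univ (fun k => M i k) w
    _ = (∑ i, ∑ k, M i k ^ 2) * (∑ k, w k ^ 2) := by rw [Finset.sum_mul]

lemma frob_vecMulVec {m r : ℕ} (x : Fin m → ℝ) (w : Fin r → ℝ) :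
    frob (vecMulVec x w) = vn x * vn w := by
  rw [frob, vn, vn, ← Real.sqrt_mul (by positivity), Finset.sum_mul_sum]
  congr 1
  simp [Matrix.vecMulVec_apply, mul_pow]

/-! ### Operator norm facts -/

lemma opNorm_eq {m n : ℕ} (M : Matrix (Fin m) (Fin n) ℝ) : opNorm M = ‖M‖ := rfl

lemma opNorm_nonneg {m n : ℕ} (M : Matrix (Fin m) (Fin n) ℝ) : 0 ≤ opNorm M :=
  norm_nonneg _

lemma vn_mulVec_le_op {m n : ℕ} (M : Matrix (Fin m) (Fin n) ℝ) (w : Fin n → ℝ) :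
    vn (M.mulVec w) ≤ opNorm M * vn w := by
  rw [vn_eq, vn_eq, opNorm_eq]
  exact M.l2_opNorm_mulVec ((WithLp.equiv 2 (Fin n → ℝ)).symm w)

lemma opNorm_transpose {m n : ℕ} (M : Matrix (Fin m) (Fin n) ℝ) :
    opNorm Mᵀ = opNorm M := by
  rw [opNorm_eq, opNorm_eq, ← Matrix.conjTranspose_eq_transpose_of_trivial,
    Matrix.l2_opNorm_conjTranspose]

lemma opNorm_add_le {m n : ℕ} (X Y : Matrix (Fin m) (Fin n) ℝ) :
    opNorm (X + Y) ≤ opNorm X + opNorm Y := by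
  rw [opNorm_eq, opNorm_eq, opNorm_eq]
  exact norm_add_le _ _

lemma opNorm_le_frob {m n : ℕ} (M : Matrix (Fin m) (Fin n) ℝ) :
    opNorm M ≤ frob M := by
  rw [opNorm_eq, Matrix.l2_opNorm_def]
  refine ContinuousLinearMap.opNorm_le_bound _ (frob_nonneg M) (fun x => ?_)
  have h := vn_mulVec_le_frob M (WithLp.equiv 2 (Fin n → ℝ) x)
  rw [vn_eq, vn_eq] at h
  simpa [Matrix.toEuclideanLin_apply] using h

/-! ### vecMulVec algebra -/

lemma vecMulVec_add_right {m r : ℕ} (x : Fin m → ℝ) (a b : Fin r → ℝ) :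
    vecMulVec x (a + b) = vecMulVec x a + vecMulVec x b := by
  ext i j; simp [Matrix.vecMulVec_apply]; ring

lemma vecMulVec_add_left {m r : ℕ} (a b : Fin m → ℝ) (x : Fin r → ℝ) :
    vecMulVec (a + b) x = vecMulVec a x + vecMulVec b x := by
  ext i j; simp [Matrix.vecMulVec_apply]; ring

lemma vecMulVec_smul_right {m r : ℕ} (x : Fin m → ℝ) (c : ℝ) (a : Fin r → ℝ) :
    vecMulVec x (c • a) = c • vecMulVec x a := by
  ext i j; simp [Matrix.vecMulVec_apply]; ring

lemma vecMulVec_smul_left {m r : ℕ} (c : ℝ) (a : Fin m → ℝ) (x : Fin r → ℝ) :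
    vecMulVec (c • a) x = c • vecMulVec a x := by
  ext i j; simp [Matrix.vecMulVec_apply]; ring

lemma vecMulVec_mul {m n r : ℕ} (x : Fin m → ℝ) (w : Fin n → ℝ)
    (U : Matrix (Fin n) (Fin r) ℝ) :
    vecMulVec x w * U = vecMulVec x (Uᵀ.mulVec w) := by
  ext i j
  simp only [Matrix.mul_apply, Matrix.vecMulVec_apply, Matrix.mulVec, dotProduct,
    Matrix.transpose_apply, Finset.mul_sum]
  exact Finset.sum_congr rfl (fun k _ => by ring)

/-- Local Lipschitz bound for the gradient map: if `L ≥ 0`, `β ≥ 0`,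
`‖U − U'‖_F ≤ 1`, `‖U'‖_op ≤ 1`, and `U'(U')ᵀ1 = 1`, then
`‖g(U) − g(U')‖_F ≤ (‖2A + y1ᵀ + 1yᵀ‖_F + 2L + 12nβ)‖U − U'‖_F`. -/
theorem grad_local_lipschitz {n r : ℕ}
    (A : Matrix (Fin n) (Fin n) ℝ) (hA : Aᵀ = A)
    (y : Fin n → ℝ) (L β : ℝ) (hL : 0 ≤ L) (hβ : 0 ≤ β)
    (U U' : Matrix (Fin n) (Fin r) ℝ)
    (hclose : frob (U - U') ≤ 1)
    (hop : opNorm U' ≤ 1)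
    (hrow : (U' * U'ᵀ).mulVec (ones n) = ones n) :
    frob (gradLag A y L β U - gradLag A y L β U') ≤
      (frob ((2 : ℝ) • A + Matrix.vecMulVec y (ones n) + Matrix.vecMulVec (ones n) y)
          + 2 * L + 12 * n * β) * frob (U - U') := by
  set D : Matrix (Fin n) (Fin r) ℝ := U - U' with hD
  set v : Fin n → ℝ := (U * Uᵀ).mulVec (ones n) - ones n with hv
  set S : Matrix (Fin n) (Fin n) ℝ :=
    (2 : ℝ) • A + Matrix.vecMulVec y (ones n) + Matrix.vecMulVec (ones n) y with hS
  set d : ℝ := frob D with hd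
  have hd0 : 0 ≤ d := frob_nonneg D
  have hsq : Real.sqrt n * Real.sqrt n = n := Real.mul_self_sqrt (Nat.cast_nonneg n)
  have hsqn : (0:ℝ) ≤ Real.sqrt n := Real.sqrt_nonneg _
  -- the key algebraic identity
  have hkey : gradLag A y L β U - gradLag A y L β U' =
      S * D + (2 * L) • D
        + β • (vecMulVec (ones n) (Uᵀ.mulVec v))
        + β • (vecMulVec v (Uᵀ.mulVec (ones n))) := by
    have h0 : y + β • ((U' * U'ᵀ).mulVec (ones n) - ones n) = y := by
      rw [hrow, sub_self, smul_zero, add_zero]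
    rw [gradLag, gradLag, h0, ← hv]
    rw [vecMulVec_add_right, vecMulVec_smul_right, vecMulVec_add_left, vecMulVec_smul_left]
    rw [← _root_.vecMulVec_mul (ones n) v U, ← _root_.vecMulVec_mul v (ones n) U]
    simp only [hS, hD, Matrix.add_mul, Matrix.mul_sub, Matrix.smul_mul, Matrix.one_mul,
      smul_sub]
    abel
  -- operator norm bound on `Uᵀ`
  have hUt : opNorm Uᵀ ≤ 2 := by
    have hU : U = U' + D := by rw [hD]; abel
    calc opNorm Uᵀ = opNorm (U'ᵀ + Dᵀ) := by rw [hU, Matrix.transpose_add]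
      _ ≤ opNorm U'ᵀ + opNorm Dᵀ := opNorm_add_le _ _
      _ ≤ 1 + 1 := by
          gcongr
          · rw [opNorm_transpose]; exact hop
          · exact le_trans (opNorm_le_frob _) (le_trans (le_of_eq (frob_transpose D)) hclose)
      _ = 2 := by norm_num
  have hU1 : vn (Uᵀ.mulVec (ones n)) ≤ 2 * Real.sqrt n := by
    calc vn (Uᵀ.mulVec (ones n)) ≤ opNorm Uᵀ * vn (ones n) := vn_mulVec_le_op _ _
      _ ≤ 2 * Real.sqrt n := by
          rw [vn_ones]
          exact mul_le_mul_of_nonneg_right hUt hsqn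
  -- bound on v
  have hvb : vn v ≤ 3 * Real.sqrt n * d := by
    have hmat : U * Uᵀ - U' * U'ᵀ = D * Uᵀ + U' * Dᵀ := by
      simp only [hD, Matrix.transpose_sub, Matrix.sub_mul, Matrix.mul_sub]
      abel
    have hsplit : v = D.mulVec (Uᵀ.mulVec (ones n)) + U'.mulVec (Dᵀ.mulVec (ones n)) := by
      rw [hv]
      nth_rewrite 2 [← hrow]
      rw [← Matrix.sub_mulVec, hmat, Matrix.add_mulVec, ← Matrix.mulVec_mulVec,
        ← Matrix.mulVec_mulVec]
    have a1 : vn (D.mulVec (Uᵀ.mulVec (ones n))) ≤ d * (2 * Real.sqrt n) := by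
      calc vn (D.mulVec (Uᵀ.mulVec (ones n))) ≤ frob D * vn (Uᵀ.mulVec (ones n)) :=
            vn_mulVec_le_frob _ _
        _ ≤ d * (2 * Real.sqrt n) := mul_le_mul_of_nonneg_left hU1 hd0
    have a2 : vn (U'.mulVec (Dᵀ.mulVec (ones n))) ≤ d * Real.sqrt n := by
      have b1 : vn (Dᵀ.mulVec (ones n)) ≤ d * Real.sqrt n := by
        calc vn (Dᵀ.mulVec (ones n)) ≤ frob Dᵀ * vn (ones n) := vn_mulVec_le_frob _ _
          _ = d * Real.sqrt n := by rw [frob_transpose, vn_ones]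
      calc vn (U'.mulVec (Dᵀ.mulVec (ones n))) ≤ opNorm U' * vn (Dᵀ.mulVec (ones n)) :=
            vn_mulVec_le_op _ _
        _ ≤ 1 * (d * Real.sqrt n) :=
            mul_le_mul hop b1 (vn_nonneg _) zero_le_one
        _ = d * Real.sqrt n := one_mul _
    calc vn v ≤ vn (D.mulVec (Uᵀ.mulVec (ones n))) + vn (U'.mulVec (Dᵀ.mulVec (ones n))) := by
          rw [hsplit]; exact vn_add_le _ _
      _ ≤ d * (2 * Real.sqrt n) + d * Real.sqrt n := add_le_add a1 a2
      _ = 3 * Real.sqrt n * d := by ring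
  have hUv : vn (Uᵀ.mulVec v) ≤ 2 * (3 * Real.sqrt n * d) := by
    calc vn (Uᵀ.mulVec v) ≤ opNorm Uᵀ * vn v := vn_mulVec_le_op _ _
      _ ≤ 2 * (3 * Real.sqrt n * d) :=
          mul_le_mul hUt hvb (vn_nonneg _) (by norm_num)
  -- Frobenius bounds on the two rank-one pieces
  have b1 : frob (vecMulVec (ones n) (Uᵀ.mulVec v)) ≤ 6 * n * d := by
    rw [frob_vecMulVec, vn_ones]
    calc Real.sqrt n * vn (Uᵀ.mulVec v) ≤ Real.sqrt n * (2 * (3 * Real.sqrt n * d)) :=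
          mul_le_mul_of_nonneg_left hUv hsqn
      _ = 6 * (Real.sqrt n * Real.sqrt n) * d := by ring
      _ = 6 * n * d := by rw [hsq]
  have b2 : frob (vecMulVec v (Uᵀ.mulVec (ones n))) ≤ 6 * n * d := by
    rw [frob_vecMulVec]
    calc vn v * vn (Uᵀ.mulVec (ones n)) ≤ (3 * Real.sqrt n * d) * (2 * Real.sqrt n) :=
          mul_le_mul hvb hU1 (vn_nonneg _) (by positivity)
      _ = 6 * (Real.sqrt n * Real.sqrt n) * d := by ring
      _ = 6 * n * d := by rw [hsq]
  -- assemble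
  rw [hkey]
  calc frob (S * D + (2 * L) • D + β • (vecMulVec (ones n) (Uᵀ.mulVec v))
          + β • (vecMulVec v (Uᵀ.mulVec (ones n))))
      ≤ frob (S * D + (2 * L) • D + β • (vecMulVec (ones n) (Uᵀ.mulVec v)))
          + frob (β • (vecMulVec v (Uᵀ.mulVec (ones n)))) :=
          frob_add_le (S * D + (2 * L) • D + β • (vecMulVec (ones n) (Uᵀ.mulVec v)))
            (β • (vecMulVec v (Uᵀ.mulVec (ones n))))
    _ ≤ frob (S * D + (2 * L) • D) + frob (β • (vecMulVec (ones n) (Uᵀ.mulVec v)))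
          + frob (β • (vecMulVec v (Uᵀ.mulVec (ones n)))) :=
        add_le_add_left (frob_add_le (S * D + (2 * L) • D)
          (β • (vecMulVec (ones n) (Uᵀ.mulVec v)))) _
    _ ≤ frob (S * D) + frob ((2 * L) • D) + frob (β • (vecMulVec (ones n) (Uᵀ.mulVec v)))
          + frob (β • (vecMulVec v (Uᵀ.mulVec (ones n)))) := by
        have := frob_add_le (S * D) ((2 * L) • D)
        linarith
    _ ≤ frob S * d + (2 * L) * d + β * (6 * n * d) + β * (6 * n * d) := by
        have e1 : frob ((2 * L) • D) = (2 * L) * d := by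
          rw [frob_smul, abs_of_nonneg (by linarith : (0:ℝ) ≤ 2 * L)]
        have e2 : frob (β • (vecMulVec (ones n) (Uᵀ.mulVec v))) ≤ β * (6 * n * d) := by
          rw [frob_smul, abs_of_nonneg hβ]
          exact mul_le_mul_of_nonneg_left b1 hβ
        have e3 : frob (β • (vecMulVec v (Uᵀ.mulVec (ones n)))) ≤ β * (6 * n * d) := by
          rw [frob_smul, abs_of_nonneg hβ]
          exact mul_le_mul_of_nonneg_left b2 hβ
        have e0 : frob (S * D) ≤ frob S * d := frob_mul_le S D
        linarith
    _ = (frob S + 2 * L + 12 * n * β) * d := by ring
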